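/- Let H be an atomic cancellative monoid with H ≠ H^×. Then ρ(H) = sup { ρ_k(H)/k : k ∈ ℕ } = lim_{k→∞} ρ_k(H)/k, and 1/ρ(H) = inf { λ_k(H)/k : k ∈ ℕ } = lim_{k→∞} λ_k(H)/k (with the convention 1/ρ(H) = 0 when ρ(H) = ∞). -/

import Mathlib

open scoped Classical ENNReal

/-- The set of lengths of `a`: all `k` such that `a` is a product of `k` irreducibles,
with the convention `L(a) = {0}` for units. -/
noncomputable def lengths {M : Type*} [Monoid M] (a : M) : Set ℕ :=
  if IsUnit a then {0}
  else {k | ∃ l : List M, l.length = k ∧ (∀ x ∈ l, Irreducible x) ∧ l.prod = a}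

/-- A monoid is atomic if every nonunit is a finite product of irreducibles (atoms). -/
def Atomic (M : Type*) [Monoid M] : Prop :=
  ∀ a : M, ¬IsUnit a → ∃ l : List M, (∀ x ∈ l, Irreducible x) ∧ l.prod = a

/-- The set of distances of a set `L ⊆ ℕ`. -/
def distances (L : Set ℕ) : Set ℕ :=
  {d | 0 < d ∧ ∃ k ∈ L, k + d ∈ L ∧ ∀ m ∈ L, k ≤ m → m ≤ k + d → m = k ∨ m = k + d}

/-- The set of distances `Δ(H)` of a monoid. -/
def DeltaH (M : Type*) [Monoid M] : Set ℕ :=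
  ⋃ a : M, distances (lengths a)

/-- The union `U_k(H)` of all sets of lengths containing `k`. -/
def lengthUnion (M : Type*) [Monoid M] (k : ℕ) : Set ℕ :=
  {ℓ | ∃ l1 l2 : List M, l1.length = k ∧ l2.length = ℓ ∧
      (∀ x ∈ l1, Irreducible x) ∧ (∀ x ∈ l2, Irreducible x) ∧ l1.prod = l2.prod}

/-- The `k`-th elasticity `ρ_k(H) = sup U_k(H)`, valued in `ℝ≥0∞`. -/
noncomputable def rhoK (M : Type*) [Monoid M] (k : ℕ) : ℝ≥0∞ :=
  ⨆ ℓ ∈ lengthUnion M k, (ℓ : ℝ≥0∞)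

/-- `λ_k(H) = min U_k(H)`. -/
noncomputable def lamK (M : Type*) [Monoid M] (k : ℕ) : ℕ :=
  sInf (lengthUnion M k)

/-- The elasticity `ρ(L) = sup L / min L` of a set of lengths, with `ρ({0}) = 1`. -/
noncomputable def setElasticity (L : Set ℕ) : ℝ≥0∞ :=
  if L = {0} then 1 else (⨆ n ∈ L, (n : ℝ≥0∞)) / ((sInf L : ℕ) : ℝ≥0∞)

/-- The elasticity `ρ(H) = sup { ρ(L(a)) : a ∈ H }`. -/
noncomputable def elasticity (M : Type*) [Monoid M] : ℝ≥0∞ :=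
  ⨆ a : M, setElasticity (lengths a)

/-- The principal left ideal `Ha`. -/
def leftIdeal {M : Type*} [Monoid M] (a : M) : Set M := Set.range (· * a)

/-- The principal right ideal `aH`. -/
def rightIdeal {M : Type*} [Monoid M] (a : M) : Set M := Set.range (a * ·)

/-- `A` is a generating set of the monoid `M`. -/
def Generates {M : Type*} [Monoid M] (A : Set M) : Prop :=
  ∀ a : M, ∃ l : List M, (∀ x ∈ l, x ∈ A) ∧ l.prod = a

open Filter
open scoped NNReal Topology

section Basic
variable {M : Type*} [CancelMonoid M]

lemma isUnit_of_mul_eq_one'' {a b : M} (h : a * b = 1) : IsUnit a := by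
  have h2 : b * a = 1 := by
    have : a * (b * a) = a * 1 := by rw [← mul_assoc, h, one_mul, mul_one]
    exact mul_left_cancel this
  exact ⟨⟨a, b, h, h2⟩, rfl⟩

lemma isUnit_left_of_isUnit_mul {a b : M} (h : IsUnit (a * b)) : IsUnit a := by
  obtain ⟨u, hu⟩ := h
  have : a * (b * ↑u⁻¹) = 1 := by
    rw [← mul_assoc, ← hu]; simp
  exact isUnit_of_mul_eq_one'' this

lemma prod_atoms_not_unit {l : List M} (hl : l ≠ []) (h : ∀ x ∈ l, Irreducible x) :
    ¬ IsUnit l.prod := by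
  match l, hl with
  | a :: t, _ =>
    rw [List.prod_cons]
    intro hu
    exact (h a (by simp)).not_isUnit (isUnit_left_of_isUnit_mul hu)

lemma prod_atoms_unit_iff {l : List M} (h : ∀ x ∈ l, Irreducible x) :
    IsUnit l.prod ↔ l = [] := by
  constructor
  · intro hu; by_contra hne; exact prod_atoms_not_unit hne h hu
  · rintro rfl; simp

end Basic
section Uk
variable {M : Type*} [CancelMonoid M]

lemma exists_atom (hA : Atomic M) (hne : ∃ a : M, ¬IsUnit a) : ∃ p : M, Irreducible p := by
  obtain ⟨a, ha⟩ := hne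
  obtain ⟨l, hl, hprod⟩ := hA a ha
  match l, hprod with
  | [], hprod => exact absurd (hprod ▸ isUnit_one) ha
  | p :: t, _ => exact ⟨p, hl p (by simp)⟩

lemma mem_lengthUnion {M : Type*} [Monoid M] {k ℓ : ℕ} :
    ℓ ∈ lengthUnion M k ↔ ∃ l1 l2 : List M, l1.length = k ∧ l2.length = ℓ ∧
      (∀ x ∈ l1, Irreducible x) ∧ (∀ x ∈ l2, Irreducible x) ∧ l1.prod = l2.prod := Iff.rfl

lemma self_mem_lengthUnion (hA : Atomic M) (hne : ∃ a : M, ¬IsUnit a) (k : ℕ) :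
    k ∈ lengthUnion M k := by
  obtain ⟨p, hp⟩ := exists_atom hA hne
  exact ⟨List.replicate k p, List.replicate k p, by simp, by simp,
    fun x hx => (List.eq_of_mem_replicate hx) ▸ hp,
    fun x hx => (List.eq_of_mem_replicate hx) ▸ hp, rfl⟩

lemma add_mem_lengthUnion {j k a b : ℕ} (ha : a ∈ lengthUnion M j) (hb : b ∈ lengthUnion M k) :
    a + b ∈ lengthUnion M (j + k) := by
  obtain ⟨l1, l2, h1, h2, h3, h4, h5⟩ := ha
  obtain ⟨m1, m2, g1, g2, g3, g4, g5⟩ := hb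
  refine ⟨l1 ++ m1, l2 ++ m2, by simp [h1, g1], by simp [h2, g2], ?_, ?_, by simp [h5, g5]⟩
  · intro x hx; rcases List.mem_append.1 hx with h | h; exacts [h3 x h, g3 x h]
  · intro x hx; rcases List.mem_append.1 hx with h | h; exacts [h4 x h, g4 x h]

lemma pos_of_mem_lengthUnion {k ℓ : ℕ} (hk : 0 < k) (h : ℓ ∈ lengthUnion M k) : 0 < ℓ := by
  obtain ⟨l1, l2, h1, h2, h3, h4, h5⟩ := h
  by_contra h0
  push_neg at h0
  have hl2 : l2 = [] := List.length_eq_zero_iff.1 (by omega)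
  have : l1 ≠ [] := by intro h'; rw [h'] at h1; simp at h1; omega
  exact prod_atoms_not_unit this h3 (by rw [h5, hl2]; simp)

lemma mem_lengthUnion_one {ℓ : ℕ} (h : ℓ ∈ lengthUnion M 1) : ℓ = 1 := by
  obtain ⟨l1, l2, h1, h2, h3, h4, h5⟩ := h
  have hpos : 0 < ℓ := pos_of_mem_lengthUnion one_pos ⟨l1, l2, h1, h2, h3, h4, h5⟩
  match l1, h1 with
  | [p], _ =>
    simp only [List.prod_cons, List.prod_nil, mul_one] at h5
    match l2, h2 with
    | [], h2 => simp at h2; omega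
    | [q], h2 => simpa using h2.symm
    | x :: y :: t, h2 =>
      exfalso
      have hp : Irreducible p := h3 p (by simp)
      rw [List.prod_cons] at h5
      rcases hp.isUnit_or_isUnit h5 with hu | hu
      · exact (h4 x (by simp)).not_isUnit hu
      · exact prod_atoms_not_unit (by simp) (fun z hz => h4 z (by simp [hz])) hu

lemma lengthUnion_zero {ℓ : ℕ} (h : ℓ ∈ lengthUnion M 0) : ℓ = 0 := by
  obtain ⟨l1, l2, h1, h2, h3, h4, h5⟩ := h
  have hl1 : l1 = [] := List.length_eq_zero_iff.1 h1
  rw [hl1] at h5; simp at h5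
  have : l2 = [] := (prod_atoms_unit_iff h4).1 (by rw [← h5]; simp)
  rw [this] at h2; simpa using h2.symm

end Uk
section RL
variable {M : Type*} [CancelMonoid M]

lemma lengthUnion_nonempty (hA : Atomic M) (hne : ∃ a : M, ¬IsUnit a) (k : ℕ) :
    (lengthUnion M k).Nonempty := ⟨k, self_mem_lengthUnion hA hne k⟩

lemma lamK_mem (hA : Atomic M) (hne : ∃ a : M, ¬IsUnit a) (k : ℕ) :
    lamK M k ∈ lengthUnion M k := Nat.sInf_mem (lengthUnion_nonempty hA hne k)

lemma lamK_le {k ℓ : ℕ} (h : ℓ ∈ lengthUnion M k) : lamK M k ≤ ℓ := Nat.sInf_le h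

lemma lamK_le_self (hA : Atomic M) (hne : ∃ a : M, ¬IsUnit a) (k : ℕ) :
    lamK M k ≤ k := lamK_le (self_mem_lengthUnion hA hne k)

lemma lamK_pos (hA : Atomic M) (hne : ∃ a : M, ¬IsUnit a) {k : ℕ} (hk : 0 < k) :
    0 < lamK M k := pos_of_mem_lengthUnion hk (lamK_mem hA hne k)

lemma lamK_subadd (hA : Atomic M) (hne : ∃ a : M, ¬IsUnit a) (j k : ℕ) :
    lamK M (j + k) ≤ lamK M j + lamK M k :=
  lamK_le (add_mem_lengthUnion (lamK_mem hA hne j) (lamK_mem hA hne k))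

lemma lamK_mul (hA : Atomic M) (hne : ∃ a : M, ¬IsUnit a) (q m : ℕ) :
    lamK M (q * m) ≤ q * lamK M m := by
  induction q with
  | zero => simpa using lamK_le_self hA hne 0
  | succ n ih =>
    calc lamK M ((n + 1) * m) = lamK M (n * m + m) := by ring_nf
      _ ≤ lamK M (n * m) + lamK M m := lamK_subadd hA hne _ _
      _ ≤ n * lamK M m + lamK M m := Nat.add_le_add_right ih _
      _ = (n + 1) * lamK M m := by ring

lemma le_rhoK {k ℓ : ℕ} (h : ℓ ∈ lengthUnion M k) : (ℓ : ℝ≥0∞) ≤ rhoK M k :=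
  le_iSup₂ (f := fun (ℓ : ℕ) (_ : ℓ ∈ lengthUnion M k) => (ℓ : ℝ≥0∞)) ℓ h

lemma self_le_rhoK (hA : Atomic M) (hne : ∃ a : M, ¬IsUnit a) (k : ℕ) :
    (k : ℝ≥0∞) ≤ rhoK M k := le_rhoK (self_mem_lengthUnion hA hne k)

lemma rhoK_le {k : ℕ} {c : ℝ≥0∞} (h : ∀ ℓ ∈ lengthUnion M k, (ℓ : ℝ≥0∞) ≤ c) :
    rhoK M k ≤ c := iSup₂_le h

lemma rhoK_one : rhoK M 1 ≤ 1 := rhoK_le fun ℓ h => by rw [mem_lengthUnion_one h]; norm_num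

lemma rhoK_superadd (hA : Atomic M) (hne : ∃ a : M, ¬IsUnit a) (j k : ℕ) :
    rhoK M j + rhoK M k ≤ rhoK M (j + k) := by
  refine ENNReal.biSup_add_biSup_le (lengthUnion_nonempty hA hne j)
    (lengthUnion_nonempty hA hne k) (fun a ha b hb => ?_)
  have := add_mem_lengthUnion ha hb
  calc ((a : ℝ≥0∞) + b) = ((a + b : ℕ) : ℝ≥0∞) := by push_cast; ring
    _ ≤ rhoK M (j + k) := le_rhoK this

lemma rhoK_mono_add (hA : Atomic M) (hne : ∃ a : M, ¬IsUnit a) (j k : ℕ) :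
    rhoK M j ≤ rhoK M (j + k) := le_trans le_self_add (rhoK_superadd hA hne j k)

lemma rhoK_mul (hA : Atomic M) (hne : ∃ a : M, ¬IsUnit a) (q m : ℕ) :
    (q : ℝ≥0∞) * rhoK M m ≤ rhoK M (q * m) := by
  induction q with
  | zero => simp
  | succ n ih =>
    have : ((n : ℝ≥0∞) + 1) * rhoK M m = (n : ℝ≥0∞) * rhoK M m + rhoK M m := by ring
    push_cast
    rw [this]
    calc (n : ℝ≥0∞) * rhoK M m + rhoK M m ≤ rhoK M (n * m) + rhoK M m :=
          add_le_add ih le_rfl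
      _ ≤ rhoK M (n * m + m) := rhoK_superadd hA hne _ _
      _ = rhoK M ((n + 1) * m) := by ring_nf

end RL
section Lengths
variable {M : Type*} [CancelMonoid M]

lemma lengths_unit {a : M} (h : IsUnit a) : lengths a = {0} := if_pos h

lemma mem_lengths {a : M} (ha : ¬IsUnit a) {k : ℕ} :
    k ∈ lengths a ↔ ∃ l : List M, l.length = k ∧ (∀ x ∈ l, Irreducible x) ∧ l.prod = a := by
  rw [lengths, if_neg ha]; rfl

lemma zero_not_mem_lengths {a : M} (ha : ¬IsUnit a) : 0 ∉ lengths a := by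
  rw [mem_lengths ha]
  rintro ⟨l, hl, -, hprod⟩
  rw [List.length_eq_zero_iff.1 hl] at hprod
  exact ha (hprod ▸ isUnit_one)

lemma lengths_nonempty (hA : Atomic M) {a : M} (ha : ¬IsUnit a) : (lengths a).Nonempty := by
  obtain ⟨l, h1, h2⟩ := hA a ha
  exact ⟨l.length, (mem_lengths ha).2 ⟨l, rfl, h1, h2⟩⟩

lemma lengths_ne_zero_set {a : M} (hA : Atomic M) (ha : ¬IsUnit a) : lengths a ≠ {0} := by
  intro h
  exact zero_not_mem_lengths ha (h ▸ rfl)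

lemma mem_lengthUnion_of_mem_lengths {a : M} {k ℓ : ℕ} (ha : ¬IsUnit a)
    (hk : k ∈ lengths a) (hl : ℓ ∈ lengths a) : ℓ ∈ lengthUnion M k := by
  obtain ⟨l1, e1, f1, g1⟩ := (mem_lengths ha).1 hk
  obtain ⟨l2, e2, f2, g2⟩ := (mem_lengths ha).1 hl
  exact ⟨l1, l2, e1, e2, f1, f2, g1.trans g2.symm⟩

lemma setElasticity_of_ne {L : Set ℕ} (h : L ≠ {0}) :
    setElasticity L = (⨆ n ∈ L, (n : ℝ≥0∞)) / ((sInf L : ℕ) : ℝ≥0∞) := if_neg h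

lemma elasticity_upper (hA : Atomic M) (hne : ∃ a : M, ¬IsUnit a) (a : M) :
    setElasticity (lengths a) ≤ ⨆ k : ℕ, rhoK M (k + 1) / ((k : ℝ≥0∞) + 1) := by
  by_cases ha : IsUnit a
  · rw [lengths_unit ha, setElasticity, if_pos rfl]
    refine le_trans ?_ (le_iSup (fun k : ℕ => rhoK M (k + 1) / ((k : ℝ≥0∞) + 1)) 0)
    have h1 : (1 : ℝ≥0∞) ≤ rhoK M 1 := by
      simpa using self_le_rhoK hA hne 1
    simpa using h1
  · rw [setElasticity_of_ne (lengths_ne_zero_set hA ha)]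
    set L := lengths a with hL
    have hLne : L.Nonempty := lengths_nonempty hA ha
    have hmem : sInf L ∈ L := Nat.sInf_mem hLne
    have hpos : 0 < sInf L := Nat.pos_of_ne_zero fun h => zero_not_mem_lengths ha (h ▸ hmem)
    obtain ⟨j, hj⟩ : ∃ j, sInf L = j + 1 := ⟨sInf L - 1, by omega⟩
    have hsup : (⨆ n ∈ L, (n : ℝ≥0∞)) ≤ rhoK M (sInf L) :=
      iSup₂_le fun n hn => le_rhoK (mem_lengthUnion_of_mem_lengths ha hmem hn)
    calc (⨆ n ∈ L, (n : ℝ≥0∞)) / ((sInf L : ℕ) : ℝ≥0∞)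
        ≤ rhoK M (sInf L) / ((sInf L : ℕ) : ℝ≥0∞) := ENNReal.div_le_div hsup le_rfl
      _ = rhoK M (j + 1) / ((j : ℝ≥0∞) + 1) := by rw [hj]; push_cast; ring_nf
      _ ≤ _ := le_iSup (fun k : ℕ => rhoK M (k + 1) / ((k : ℝ≥0∞) + 1)) j

lemma elasticity_lower (hA : Atomic M) (k : ℕ) :
    rhoK M (k + 1) / ((k : ℝ≥0∞) + 1) ≤ elasticity M := by
  rw [rhoK]
  simp only [ENNReal.iSup_div]
  refine iSup₂_le fun ℓ hℓ => ?_
  obtain ⟨l1, l2, e1, e2, f1, f2, g⟩ := hℓ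
  have hl1ne : l1 ≠ [] := by intro h; rw [h] at e1; simp at e1
  set a := l1.prod with haa
  have ha : ¬IsUnit a := prod_atoms_not_unit hl1ne f1
  have hk : k + 1 ∈ lengths a := (mem_lengths ha).2 ⟨l1, e1, f1, rfl⟩
  have hl : ℓ ∈ lengths a := (mem_lengths ha).2 ⟨l2, e2, f2, g.symm⟩
  have h1 : (ℓ : ℝ≥0∞) ≤ ⨆ n ∈ lengths a, (n : ℝ≥0∞) :=
    le_iSup₂ (f := fun (n : ℕ) (_ : n ∈ lengths a) => (n : ℝ≥0∞)) ℓ hl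
  have h2 : ((sInf (lengths a) : ℕ) : ℝ≥0∞) ≤ (k : ℝ≥0∞) + 1 := by
    have := Nat.sInf_le hk
    calc ((sInf (lengths a) : ℕ) : ℝ≥0∞) ≤ ((k + 1 : ℕ) : ℝ≥0∞) := Nat.cast_le.2 this
      _ = (k : ℝ≥0∞) + 1 := by push_cast; ring
  calc (ℓ : ℝ≥0∞) / ((k : ℝ≥0∞) + 1)
      ≤ (⨆ n ∈ lengths a, (n : ℝ≥0∞)) / ((sInf (lengths a) : ℕ) : ℝ≥0∞) :=
        ENNReal.div_le_div h1 h2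
    _ = setElasticity (lengths a) := (setElasticity_of_ne (lengths_ne_zero_set hA ha)).symm
    _ ≤ elasticity M := le_iSup (fun a : M => setElasticity (lengths a)) a

lemma elasticity_eq (hA : Atomic M) (hne : ∃ a : M, ¬IsUnit a) :
    elasticity M = ⨆ k : ℕ, rhoK M (k + 1) / ((k : ℝ≥0∞) + 1) :=
  le_antisymm (iSup_le (elasticity_upper hA hne)) (iSup_le (elasticity_lower hA))

end Lengths
section Inf
variable {M : Type*} [CancelMonoid M]

lemma lamK_one (hA : Atomic M) (hne : ∃ a : M, ¬IsUnit a) : lamK M 1 = 1 :=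
  mem_lengthUnion_one (lamK_mem hA hne 1)

/-- The infimum in the statement. -/
noncomputable def lamInf (M : Type*) [Monoid M] : ℝ≥0∞ :=
  ⨅ k : ℕ, (lamK M (k + 1) : ℝ≥0∞) / ((k : ℝ≥0∞) + 1)

lemma lamInf_le {m : ℕ} (hm : 0 < m) : lamInf M ≤ (lamK M m : ℝ≥0∞) / (m : ℝ≥0∞) := by
  obtain ⟨j, rfl⟩ : ∃ j, m = j + 1 := ⟨m - 1, by omega⟩
  refine le_trans (iInf_le _ j) ?_
  push_cast
  exact le_rfl

lemma inv_setElasticity_nonunit (hA : Atomic M) {a : M} (ha : ¬IsUnit a) :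
    (setElasticity (lengths a))⁻¹ =
      ((sInf (lengths a) : ℕ) : ℝ≥0∞) / (⨆ n ∈ lengths a, (n : ℝ≥0∞)) := by
  rw [setElasticity_of_ne (lengths_ne_zero_set hA ha)]
  have hmem : sInf (lengths a) ∈ lengths a := Nat.sInf_mem (lengths_nonempty hA ha)
  have hpos : sInf (lengths a) ≠ 0 := fun h => zero_not_mem_lengths ha (h ▸ hmem)
  refine ENNReal.inv_div (Or.inl (by simp)) (Or.inl ?_)
  simpa using hpos

lemma iInf_le_inv_setElasticity (hA : Atomic M) (hne : ∃ a : M, ¬IsUnit a) (a : M) :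
    lamInf M ≤ (setElasticity (lengths a))⁻¹ := by
  by_cases ha : IsUnit a
  · rw [lengths_unit ha, setElasticity, if_pos rfl, inv_one]
    have := lamInf_le (M := M) one_pos
    rw [lamK_one hA hne] at this
    simpa using this
  · rw [inv_setElasticity_nonunit hA ha]
    set L := lengths a with hLdef
    have hLne : L.Nonempty := lengths_nonempty hA ha
    have hmem : sInf L ∈ L := Nat.sInf_mem hLne
    by_cases hbdd : BddAbove L
    · -- L has a maximum m
      have hm : sSup L ∈ L := Nat.sSup_mem hLne hbdd
      have hmpos : 0 < sSup L := Nat.pos_of_ne_zero fun h => zero_not_mem_lengths ha (h ▸ hm)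
      have hsup : (⨆ n ∈ L, (n : ℝ≥0∞)) = ((sSup L : ℕ) : ℝ≥0∞) := by
        refine le_antisymm (iSup₂_le fun n hn => Nat.cast_le.2 (le_csSup hbdd hn)) ?_
        exact le_iSup₂ (f := fun (n : ℕ) (_ : n ∈ L) => (n : ℝ≥0∞)) (sSup L) hm
      rw [hsup]
      refine le_trans (lamInf_le hmpos) (ENNReal.div_le_div ?_ le_rfl)
      have : sInf L ∈ lengthUnion M (sSup L) := mem_lengthUnion_of_mem_lengths ha hm hmem
      exact Nat.cast_le.2 (lamK_le this)
    · -- L is unbounded; RHS is sInf L / ⊤ but we show lamInf = 0 directly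
      refine le_trans ?_ zero_le
      refine ENNReal.le_of_forall_pos_le_add fun ε hε _ => ?_
      rw [zero_add]
      -- choose n ∈ L large
      have hL' : ∀ C : ℕ, ∃ n ∈ L, C < n := by
        intro C
        simp only [BddAbove, upperBounds, Set.Nonempty, Set.mem_setOf_eq] at hbdd
        push_neg at hbdd
        obtain ⟨n, hn, hc⟩ := hbdd C
        exact ⟨n, hn, by omega⟩
      set c := sInf L with hc
      obtain ⟨N, hN⟩ : ∃ N : ℕ, (c : ℝ≥0) ≤ N * ε := by
        refine ⟨⌈(c : ℝ≥0) / ε⌉₊, ?_⟩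
        rw [← div_le_iff₀ hε]
        exact Nat.le_ceil _
      obtain ⟨n, hnL, hn⟩ := hL' N
      have hsub : c ∈ lengthUnion M n := mem_lengthUnion_of_mem_lengths ha hnL hmem
      have hnpos : 0 < n := by omega
      calc lamInf M ≤ (lamK M n : ℝ≥0∞) / (n : ℝ≥0∞) := lamInf_le hnpos
        _ ≤ (c : ℝ≥0∞) / (n : ℝ≥0∞) := ENNReal.div_le_div (Nat.cast_le.2 (lamK_le hsub)) le_rfl
        _ ≤ (ε : ℝ≥0∞) := by
            rw [ENNReal.div_le_iff_le_mul (Or.inl (by exact_mod_cast hnpos.ne'))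
              (Or.inl (by simp))]
            calc (c : ℝ≥0∞) = ((c : ℝ≥0) : ℝ≥0∞) := by norm_cast
              _ ≤ ((N * ε : ℝ≥0) : ℝ≥0∞) := ENNReal.coe_le_coe.2 hN
              _ ≤ (ε : ℝ≥0∞) * (n : ℝ≥0∞) := by
                  push_cast
                  rw [mul_comm]
                  exact mul_le_mul le_rfl (by exact_mod_cast hn.le) zero_le zero_le

lemma inv_setElasticity_le (hA : Atomic M) (hne : ∃ a : M, ¬IsUnit a) (k : ℕ) :
    ∃ a : M, (setElasticity (lengths a))⁻¹ ≤ (lamK M (k + 1) : ℝ≥0∞) / ((k : ℝ≥0∞) + 1) := by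
  obtain ⟨l1, l2, e1, e2, f1, f2, g⟩ := lamK_mem hA hne (k + 1)
  have hl1ne : l1 ≠ [] := by intro h; rw [h] at e1; simp at e1
  set a := l1.prod with haa
  have ha : ¬IsUnit a := prod_atoms_not_unit hl1ne f1
  have hk : k + 1 ∈ lengths a := (mem_lengths ha).2 ⟨l1, e1, f1, rfl⟩
  have hl : lamK M (k + 1) ∈ lengths a := (mem_lengths ha).2 ⟨l2, e2, f2, g.symm⟩
  refine ⟨a, ?_⟩
  rw [inv_setElasticity_nonunit hA ha]
  have h1 : ((sInf (lengths a) : ℕ) : ℝ≥0∞) ≤ (lamK M (k + 1) : ℝ≥0∞) :=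
    Nat.cast_le.2 (Nat.sInf_le hl)
  have h2 : (k : ℝ≥0∞) + 1 ≤ ⨆ n ∈ lengths a, (n : ℝ≥0∞) := by
    have := le_iSup₂ (f := fun (n : ℕ) (_ : n ∈ lengths a) => (n : ℝ≥0∞)) (k + 1) hk
    calc (k : ℝ≥0∞) + 1 = ((k + 1 : ℕ) : ℝ≥0∞) := by push_cast; ring
      _ ≤ _ := this
  exact ENNReal.div_le_div h1 h2

lemma one_div_elasticity_eq (hA : Atomic M) (hne : ∃ a : M, ¬IsUnit a) :
    1 / elasticity M = lamInf M := by
  rw [one_div, elasticity, ENNReal.inv_iSup]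
  refine le_antisymm ?_ ?_
  · refine le_iInf fun k => ?_
    obtain ⟨a, ha⟩ := inv_setElasticity_le hA hne k
    exact le_trans (iInf_le _ a) ha
  · exact le_iInf fun a => iInf_le_inv_setElasticity hA hne a

end Inf
section Helpers

lemma nat_tendsto_div_atTop {m : ℕ} (hm : 0 < m) :
    Filter.Tendsto (fun k : ℕ => k / m) Filter.atTop Filter.atTop := by
  refine Filter.tendsto_atTop_atTop.2 fun b => ⟨b * m, fun k hk => ?_⟩
  exact (Nat.le_div_iff_mul_le hm).2 hk

lemma helper_tendsto_nat (c d m : ℕ) (hm : 0 < m) :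
    Filter.Tendsto (fun q : ℕ => ((q * c + d : ℕ) : ℝ≥0∞) / ((q * m : ℕ) : ℝ≥0∞))
      Filter.atTop (𝓝 ((c : ℝ≥0∞) / (m : ℝ≥0∞))) := by
  have hreal : Filter.Tendsto (fun q : ℕ => ((q * c + d : ℝ)) / (q * m)) Filter.atTop
      (𝓝 ((c : ℝ) / m)) := by
    have h1 : Filter.Tendsto (fun q : ℕ => ((c : ℝ) + (d : ℝ) * (1 / (q : ℝ))) / (m : ℝ)) Filter.atTop
        (𝓝 (((c : ℝ) + (d : ℝ) * 0) / (m : ℝ))) := by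
      exact (((tendsto_const_nhds).add ((tendsto_one_div_atTop_nhds_zero_nat).const_mul (d : ℝ))).div_const m)
    rw [mul_zero, add_zero] at h1
    refine h1.congr' ?_
    filter_upwards [Filter.eventually_gt_atTop 0] with q hq
    have hq' : (q : ℝ) ≠ 0 := Nat.cast_ne_zero.2 hq.ne'
    field_simp
  have := ENNReal.tendsto_ofReal hreal
  have hofr : ENNReal.ofReal ((c : ℝ) / m) = (c : ℝ≥0∞) / (m : ℝ≥0∞) := by
    rw [ENNReal.ofReal_div_of_pos (by exact_mod_cast hm)]
    simp [ENNReal.ofReal_natCast]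
  rw [hofr] at this
  refine this.congr' ?_
  filter_upwards [Filter.eventually_gt_atTop 0] with q hq
  rw [ENNReal.ofReal_div_of_pos (by positivity)]
  have h1 : ((q * c + d : ℕ) : ℝ) = (q : ℝ) * c + d := by push_cast; ring
  have h2 : ((q * m : ℕ) : ℝ) = (q : ℝ) * m := by push_cast; ring
  rw [← h1, ← h2, ENNReal.ofReal_natCast, ENNReal.ofReal_natCast]

lemma helper_tendsto_ennreal {r : ℝ≥0∞} (hr : r ≠ ⊤) {m : ℕ} (hm : 0 < m) :
    Filter.Tendsto (fun q : ℕ => (q : ℝ≥0∞) * r / (((q + 1) * m : ℕ) : ℝ≥0∞))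
      Filter.atTop (𝓝 (r / (m : ℝ≥0∞))) := by
  set rr := r.toReal with hrr
  have hrr0 : 0 ≤ rr := ENNReal.toReal_nonneg
  have hreal : Filter.Tendsto (fun q : ℕ => ((q : ℝ) * rr) / ((q + 1) * m)) Filter.atTop
      (𝓝 (rr / m)) := by
    have h1 : Filter.Tendsto (fun q : ℕ => (rr - rr * (1 / ((q : ℝ) + 1))) / m) Filter.atTop
        (𝓝 ((rr - rr * 0) / m)) :=
      ((tendsto_const_nhds.sub ((tendsto_one_div_add_atTop_nhds_zero_nat).const_mul rr)).div_const m)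
    rw [mul_zero, sub_zero] at h1
    refine h1.congr' ?_
    filter_upwards [Filter.eventually_gt_atTop 0] with q hq
    have hq1 : (q : ℝ) + 1 ≠ 0 := by positivity
    have hm' : (m : ℝ) ≠ 0 := Nat.cast_ne_zero.2 hm.ne'
    field_simp
    ring
  have := ENNReal.tendsto_ofReal hreal
  have hofr : ENNReal.ofReal (rr / m) = r / (m : ℝ≥0∞) := by
    rw [ENNReal.ofReal_div_of_pos (by exact_mod_cast hm), hrr,
      ENNReal.ofReal_toReal hr, ENNReal.ofReal_natCast]
  rw [hofr] at this
  refine this.congr' ?_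
  filter_upwards [Filter.eventually_ge_atTop 0] with q _
  rw [ENNReal.ofReal_div_of_pos (by positivity), ENNReal.ofReal_mul (by positivity)]
  have h2 : ((q + 1 : ℝ)) * m = (((q + 1) * m : ℕ) : ℝ) := by push_cast; ring
  rw [h2, ENNReal.ofReal_natCast, ENNReal.ofReal_natCast, hrr, ENNReal.ofReal_toReal hr]

end Helpers
section TendstoMain
variable {M : Type*} [CancelMonoid M]

lemma tendsto_rho (hA : Atomic M) (hne : ∃ a : M, ¬IsUnit a) :
    Filter.Tendsto (fun k : ℕ => rhoK M k / (k : ℝ≥0∞)) Filter.atTop (𝓝 (elasticity M)) := by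
  rw [elasticity_eq hA hne]
  refine tendsto_of_le_liminf_of_limsup_le ?_ ?_
  · -- sup ≤ liminf
    refine iSup_le fun m => ?_
    have hm1pos : 0 < m + 1 := Nat.succ_pos m
    have hcast : (m : ℝ≥0∞) + 1 = ((m + 1 : ℕ) : ℝ≥0∞) := by push_cast; ring
    rw [hcast]
    by_cases hr : rhoK M (m + 1) = ⊤
    · refine le_trans le_top (le_liminf_of_le (by isBoundedDefault) ?_)
      filter_upwards [Filter.eventually_ge_atTop (m + 1)] with k hk
      have hktop : rhoK M k = ⊤ := by
        have h := rhoK_mono_add hA hne (m + 1) (k - (m + 1))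
        rw [Nat.add_sub_cancel' hk] at h
        exact top_le_iff.1 (hr ▸ h)
      have hk0 : (k : ℝ≥0∞) ≠ 0 := by exact_mod_cast (by omega : k ≠ 0)
      rw [hktop]
      simp [ENNReal.top_div]
    · have hbound : ∀ᶠ k in Filter.atTop,
          ((fun q : ℕ => (q : ℝ≥0∞) * rhoK M (m + 1) / (((q + 1) * (m + 1) : ℕ) : ℝ≥0∞)) ∘
            (fun k : ℕ => k / (m + 1))) k ≤ rhoK M k / (k : ℝ≥0∞) := by
        filter_upwards [Filter.eventually_ge_atTop (m + 1)] with k hk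
        simp only [Function.comp_apply]
        set q := k / (m + 1) with hq
        have h1 : (q : ℝ≥0∞) * rhoK M (m + 1) ≤ rhoK M k := by
          calc (q : ℝ≥0∞) * rhoK M (m + 1) ≤ rhoK M (q * (m + 1)) := rhoK_mul hA hne q (m + 1)
            _ ≤ rhoK M (q * (m + 1) + (k - q * (m + 1))) := rhoK_mono_add hA hne _ _
            _ = rhoK M k := by rw [Nat.add_sub_cancel' (Nat.div_mul_le_self k (m + 1))]
        have e1 : (m + 1) * q + k % (m + 1) = k := Nat.div_add_mod k (m + 1)
        have e2 : k % (m + 1) < m + 1 := Nat.mod_lt _ hm1pos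
        have hklt : k < (q + 1) * (m + 1) := by
          calc k = (m + 1) * q + k % (m + 1) := e1.symm
            _ < (m + 1) * q + (m + 1) := Nat.add_lt_add_left e2 _
            _ = (q + 1) * (m + 1) := by ring
        have h2 : (k : ℝ≥0∞) ≤ (((q + 1) * (m + 1) : ℕ) : ℝ≥0∞) := Nat.cast_le.2 hklt.le
        exact ENNReal.div_le_div h1 h2
      have hg := (helper_tendsto_ennreal hr hm1pos).comp (nat_tendsto_div_atTop hm1pos)
      calc rhoK M (m + 1) / ((m + 1 : ℕ) : ℝ≥0∞)
          = Filter.liminf ((fun q : ℕ => (q : ℝ≥0∞) * rhoK M (m + 1) /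
              (((q + 1) * (m + 1) : ℕ) : ℝ≥0∞)) ∘ (fun k : ℕ => k / (m + 1)))
              Filter.atTop := hg.liminf_eq.symm
        _ ≤ _ := liminf_le_liminf hbound
  · -- limsup ≤ sup
    refine limsup_le_of_le (by isBoundedDefault) ?_
    filter_upwards [Filter.eventually_ge_atTop 1] with k hk
    obtain ⟨j, rfl⟩ : ∃ j, k = j + 1 := ⟨k - 1, by omega⟩
    have hcast : ((j + 1 : ℕ) : ℝ≥0∞) = (j : ℝ≥0∞) + 1 := by push_cast; ring
    rw [hcast]
    exact le_iSup (fun k : ℕ => rhoK M (k + 1) / ((k : ℝ≥0∞) + 1)) j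

lemma tendsto_lam (hA : Atomic M) (hne : ∃ a : M, ¬IsUnit a) :
    Filter.Tendsto (fun k : ℕ => (lamK M k : ℝ≥0∞) / (k : ℝ≥0∞)) Filter.atTop
      (𝓝 (lamInf M)) := by
  refine tendsto_of_le_liminf_of_limsup_le ?_ ?_
  · refine le_liminf_of_le (by isBoundedDefault) ?_
    filter_upwards [Filter.eventually_ge_atTop 1] with k hk
    exact lamInf_le (by omega)
  · rw [lamInf]
    refine le_iInf fun m => ?_
    have hm1pos : 0 < m + 1 := Nat.succ_pos m
    set c := lamK M (m + 1) with hc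
    have hcast : (m : ℝ≥0∞) + 1 = ((m + 1 : ℕ) : ℝ≥0∞) := by push_cast; ring
    rw [hcast]
    have hbound : ∀ᶠ k in Filter.atTop, (lamK M k : ℝ≥0∞) / (k : ℝ≥0∞) ≤
        ((fun q : ℕ => ((q * c + (m + 1) : ℕ) : ℝ≥0∞) / ((q * (m + 1) : ℕ) : ℝ≥0∞)) ∘
          (fun k : ℕ => k / (m + 1))) k := by
      filter_upwards [Filter.eventually_ge_atTop (m + 1)] with k hk
      simp only [Function.comp_apply]
      set q := k / (m + 1) with hq
      have e1 : (m + 1) * q + k % (m + 1) = k := Nat.div_add_mod k (m + 1)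
      have e2 : k % (m + 1) < m + 1 := Nat.mod_lt _ hm1pos
      have h1 : lamK M k ≤ q * c + (m + 1) := by
        calc lamK M k = lamK M (q * (m + 1) + k % (m + 1)) := by
              rw [show q * (m + 1) + k % (m + 1) = k by rw [mul_comm]; omega]
          _ ≤ lamK M (q * (m + 1)) + lamK M (k % (m + 1)) := lamK_subadd hA hne _ _
          _ ≤ q * c + k % (m + 1) := Nat.add_le_add (lamK_mul hA hne q (m + 1))
              (lamK_le_self hA hne _)
          _ ≤ q * c + (m + 1) := by omega
      have h2 : (q * (m + 1) : ℕ) ≤ k := Nat.div_mul_le_self k (m + 1)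
      exact ENNReal.div_le_div (Nat.cast_le.2 h1) (Nat.cast_le.2 h2)
    have hg := (helper_tendsto_nat c (m + 1) (m + 1) hm1pos).comp (nat_tendsto_div_atTop hm1pos)
    calc Filter.limsup (fun k : ℕ => (lamK M k : ℝ≥0∞) / (k : ℝ≥0∞)) Filter.atTop
        ≤ Filter.limsup ((fun q : ℕ => ((q * c + (m + 1) : ℕ) : ℝ≥0∞) /
            ((q * (m + 1) : ℕ) : ℝ≥0∞)) ∘ (fun k : ℕ => k / (m + 1))) Filter.atTop :=
          limsup_le_limsup hbound
      _ = (c : ℝ≥0∞) / ((m + 1 : ℕ) : ℝ≥0∞) := hg.limsup_eq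

end TendstoMain
theorem stmt6 {M : Type*} [CancelMonoid M] (hA : Atomic M) (hne : ∃ a : M, ¬IsUnit a) :
    elasticity M = (⨆ k : ℕ, rhoK M (k + 1) / ((k : ℝ≥0∞) + 1)) ∧
    Filter.Tendsto (fun k : ℕ => rhoK M k / (k : ℝ≥0∞)) Filter.atTop (nhds (elasticity M)) ∧
    1 / elasticity M = (⨅ k : ℕ, (lamK M (k + 1) : ℝ≥0∞) / ((k : ℝ≥0∞) + 1)) ∧
    Filter.Tendsto (fun k : ℕ => (lamK M k : ℝ≥0∞) / (k : ℝ≥0∞)) Filter.atTop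
      (nhds (1 / elasticity M)) := by
  refine ⟨elasticity_eq hA hne, tendsto_rho hA hne, ?_, ?_⟩
  · rw [one_div_elasticity_eq hA hne]; rfl
  · rw [one_div_elasticity_eq hA hne]; exact tendsto_lam hA hne
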